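/- Let s ≥ 1 and α ≥ 0 be integers. Then R_s(α) = Σ_{v=1}^{s} (-1)^{s-v} · binom(2s, s-v) · binom((α+1)v + s - 1, 2s-1). -/

import Mathlib

open Finset

/-- `R_s(α)`: the number of `2s`-tuples `(α_1,…,α_{2s}) ∈ {0,…,α}^{2s}` with
`α_1 + ⋯ + α_s = α_{s+1} + ⋯ + α_{2s}`. -/
def Rfun (s α : ℕ) : ℕ :=
  (((Fintype.piFinset fun _ : Fin s => Finset.range (α+1)) ×ˢ
      (Fintype.piFinset fun _ : Fin s => Finset.range (α+1))).filter
    fun p => ∑ i, p.1 i = ∑ i, p.2 i).card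

namespace Stmt14Aux

open PowerSeries

/-- The truncated geometric series `1 + X + ⋯ + X^α` over `ℤ`. -/
noncomputable def Gs (α : ℕ) : PowerSeries ℤ :=
  ∑ i ∈ Finset.range (α+1), (PowerSeries.X : PowerSeries ℤ) ^ i

/-- The number of `n`-tuples in `[0,α]^n` with sum `m`. -/
def Ncnt (α n m : ℕ) : ℕ :=
  ((Fintype.piFinset fun _ : Fin n => Finset.range (α+1)).filter fun x => ∑ i, x i = m).card

lemma coeff_Gs (α p : ℕ) :
    PowerSeries.coeff p (Gs α) = if p ≤ α then 1 else 0 := by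
  rw [Gs, map_sum]
  simp only [coeff_X_pow]
  rw [Finset.sum_ite_eq (Finset.range (α+1)) p (fun _ => (1:ℤ))]
  simp [Nat.lt_succ_iff]

lemma coeff_Gs_pow (α n m : ℕ) :
    PowerSeries.coeff m (Gs α ^ n) = (Ncnt α n m : ℤ) := by
  rw [coeff_pow]
  simp only [coeff_Gs]
  have h1 : ∀ l ∈ (Finset.range n).finsuppAntidiag m,
      (∏ i ∈ Finset.range n, if (l : ℕ →₀ ℕ) i ≤ α then (1:ℤ) else 0)
        = if (∀ i ∈ Finset.range n, l i ≤ α) then 1 else 0 := by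
    intro l _; exact Finset.prod_boole
  rw [Finset.sum_congr rfl h1, Finset.sum_boole]
  congr 1
  rw [Ncnt]
  refine Finset.card_nbij' (fun l => fun i : Fin n => l i)
    (fun x => Finsupp.onFinset (Finset.range n)
      (fun j => if h : j < n then x ⟨j, h⟩ else 0)
      (fun j hj => by simp only [Finset.mem_range]; by_contra hc; simp [hc] at hj))
    ?_ ?_ ?_ ?_
  · intro l hl
    simp only [Finset.mem_coe, Finset.mem_filter, Finset.mem_finsuppAntidiag] at hl
    obtain ⟨⟨hsum, hsupp⟩, hbd⟩ := hl
    simp only [Finset.mem_coe, Finset.mem_filter, Fintype.mem_piFinset, Finset.mem_range, Nat.lt_succ_iff]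
    constructor
    · intro i; exact hbd i (Finset.mem_range.mpr i.isLt)
    · rw [Fin.sum_univ_eq_sum_range (fun j => l j)]; exact hsum
  · intro x hx
    simp only [Finset.mem_coe, Finset.mem_filter, Fintype.mem_piFinset, Finset.mem_range, Nat.lt_succ_iff] at hx
    obtain ⟨hbd, hsum⟩ := hx
    simp only [Finset.mem_coe, Finset.mem_filter, Finset.mem_finsuppAntidiag]
    refine ⟨⟨?_, Finsupp.support_onFinset_subset⟩, ?_⟩
    · rw [Finset.sum_congr rfl (fun j hj => ?_)]
      · rw [← Fin.sum_univ_eq_sum_range (fun j => if h : j < n then x ⟨j, h⟩ else 0)] at *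
        rw [← hsum]
        apply Finset.sum_congr rfl
        intro i _
        simp [i.isLt]
      · rfl
    · intro j hj
      simp only [Finsupp.onFinset_apply]
      split_ifs with h
      · exact hbd _
      · exact Nat.zero_le _
  · intro l hl
    simp only [Finset.mem_coe, Finset.mem_filter, Finset.mem_finsuppAntidiag] at hl
    ext j
    simp only [Finsupp.onFinset_apply]
    split_ifs with h
    · rfl
    · symm
      by_contra hc
      have := hl.1.2 (Finsupp.mem_support_iff.mpr hc)
      simp only [Finset.mem_range] at this
      omega
  · intro x hx
    funext i
    simp [i.isLt]

/-- Key algebraic identity: `Gs α ^ n = (1 - X^(α+1))^n * (1-X)^{-n}`. -/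
lemma Gs_pow_eq (α n : ℕ) :
    Gs α ^ n = (1 - PowerSeries.X ^ (α+1)) ^ n * (invOneSubPow ℤ n).val := by
  have h1 : (1 - PowerSeries.X : PowerSeries ℤ) * Gs α = 1 - PowerSeries.X ^ (α+1) := by
    have := geom_sum_mul (PowerSeries.X : PowerSeries ℤ) (α+1)
    rw [Gs]
    linear_combination -this
  have h2 : (Gs α) ^ n * ((1 - PowerSeries.X : PowerSeries ℤ) ^ n)
      = (1 - PowerSeries.X ^ (α+1)) ^ n := by
    rw [← mul_pow, mul_comm, h1]
  calc Gs α ^ n = Gs α ^ n * (((invOneSubPow ℤ n).inv) * ((invOneSubPow ℤ n).val)) := by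
        rw [Units.inv_eq_val_inv, Units.inv_mul, mul_one]
    _ = (Gs α ^ n * (1 - PowerSeries.X) ^ n) * (invOneSubPow ℤ n).val := by
        rw [invOneSubPow_inv_eq_one_sub_pow]; ring
    _ = (1 - PowerSeries.X ^ (α+1)) ^ n * (invOneSubPow ℤ n).val := by rw [h2]

lemma coeff_invOneSubPow (n k : ℕ) (hn : 0 < n) :
    PowerSeries.coeff k (invOneSubPow ℤ n).val = (Nat.choose (n - 1 + k) (n-1) : ℤ) := by
  rw [invOneSubPow_val_eq_mk_sub_one_add_choose_of_pos _ _ hn, PowerSeries.coeff_mk]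

/-- Inclusion–exclusion formula for the number of bounded compositions. -/
lemma coeff_formula (α n m : ℕ) (hn : 0 < n) :
    (Ncnt α n m : ℤ) = ∑ j ∈ Finset.range (n+1),
      (-1)^j * (Nat.choose n j : ℤ) *
        (if j * (α+1) ≤ m then (Nat.choose (n - 1 + (m - j*(α+1))) (n-1) : ℤ) else 0) := by
  rw [← coeff_Gs_pow, Gs_pow_eq]
  have expand : (1 - PowerSeries.X ^ (α+1) : PowerSeries ℤ) ^ n
      = ∑ j ∈ Finset.range (n+1),
          ((-1)^j * (Nat.choose n j : ℤ)) • (PowerSeries.X : PowerSeries ℤ) ^ (j*(α+1)) := by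
    rw [sub_eq_add_neg, add_comm, add_pow]
    apply Finset.sum_congr rfl
    intro j hj
    rw [neg_pow, one_pow, mul_one, pow_mul]
    rw [zsmul_eq_mul]
    push_cast
    ring
  rw [expand, Finset.sum_mul, map_sum]
  apply Finset.sum_congr rfl
  intro j hj
  rw [smul_mul_assoc, map_zsmul, coeff_X_pow_mul']
  split_ifs with h
  · rw [coeff_invOneSubPow _ _ hn]
    rw [zsmul_eq_mul]
    push_cast
    ring
  · simp

lemma Ncnt_reflect (α n p q : ℕ) (hpq : p + q = n * α) :
    Ncnt α n p = Ncnt α n q := by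
  rw [Ncnt, Ncnt]
  have key : ∀ (p q : ℕ), p + q = n * α →
      ∀ x ∈ (Fintype.piFinset fun _ : Fin n => Finset.range (α+1)).filter
        (fun x => ∑ i, x i = p),
      (fun i => α - x i) ∈ (Fintype.piFinset fun _ : Fin n => Finset.range (α+1)).filter
        (fun x => ∑ i, x i = q) := by
    intro p q hpq x hx
    simp only [Finset.mem_coe, Finset.mem_filter, Fintype.mem_piFinset, Finset.mem_range, Nat.lt_succ_iff] at *
    obtain ⟨hbd, hsum⟩ := hx
    refine ⟨fun i => Nat.sub_le _ _, ?_⟩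
    have h2 : ∑ i : Fin n, (α - x i) + ∑ i : Fin n, x i = n * α := by
      rw [← Finset.sum_add_distrib]
      have : ∀ i : Fin n, (α - x i) + x i = α := fun i => Nat.sub_add_cancel (hbd i)
      simp only [this, Finset.sum_const, Finset.card_univ, Fintype.card_fin, smul_eq_mul, mul_comm]
    omega
  refine Finset.card_nbij' (fun x => fun i => α - x i) (fun x => fun i => α - x i)
    (key p q hpq) (key q p (by omega)) ?_ ?_
  · intro x hx
    simp only [Finset.mem_coe, Finset.mem_filter, Fintype.mem_piFinset, Finset.mem_range, Nat.lt_succ_iff] at hx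
    funext i
    exact Nat.sub_sub_self (hx.1 i)
  · intro x hx
    simp only [Finset.mem_coe, Finset.mem_filter, Fintype.mem_piFinset, Finset.mem_range, Nat.lt_succ_iff] at hx
    funext i
    exact Nat.sub_sub_self (hx.1 i)

lemma Rfun_eq_sum_sq (s α : ℕ) :
    Rfun s α = ∑ k ∈ Finset.range (s*α+1), Ncnt α s k * Ncnt α s k := by
  rw [Rfun]
  rw [Finset.card_eq_sum_card_fiberwise (f := fun p => ∑ i, p.1 i)
    (t := Finset.range (s*α+1)) (fun p hp => by
      simp only [Finset.mem_coe, Finset.mem_filter, Finset.mem_product, Fintype.mem_piFinset,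
        Finset.mem_range, Nat.lt_succ_iff] at *
      calc ∑ i, p.1 i ≤ ∑ _i : Fin s, α := Finset.sum_le_sum (fun i _ => by
              have := hp.1.1 i; omega)
        _ = s * α := by simp [mul_comm]
      )]
  apply Finset.sum_congr rfl
  intro k _
  rw [Finset.filter_filter]
  rw [Finset.filter_congr (q := fun p => (∑ i, p.1 i = k) ∧ (∑ i, p.2 i = k))
    (fun p _ => by constructor <;> (rintro ⟨h1, h2⟩; omega))]
  rw [Finset.filter_product (fun x : Fin s → ℕ => ∑ i, x i = k)
    (fun x : Fin s → ℕ => ∑ i, x i = k), Finset.card_product, Ncnt]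

lemma Rfun_eq_Ncnt (s α : ℕ) :
    Rfun s α = Ncnt α (2*s) (s*α) := by
  have h2 : (Ncnt α (2*s) (s*α) : ℤ)
      = ∑ k ∈ Finset.range (s*α+1), (Ncnt α s k : ℤ) * (Ncnt α s k : ℤ) := by
    rw [← coeff_Gs_pow, two_mul, pow_add, PowerSeries.coeff_mul]
    rw [Finset.Nat.sum_antidiagonal_eq_sum_range_succ_mk]
    apply Finset.sum_congr rfl
    intro k hk
    simp only [coeff_Gs_pow]
    congr 1
    rw [Finset.mem_range, Nat.lt_succ_iff] at hk
    rw [Ncnt_reflect α s (s*α - k) k (by omega)]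
  have h1 := Rfun_eq_sum_sq s α
  have : (Rfun s α : ℤ) = (Ncnt α (2*s) (s*α) : ℤ) := by
    rw [h1, h2]
    push_cast
    rfl
  exact_mod_cast this

end Stmt14Aux

open Stmt14Aux in
theorem stmt14 (s α : ℕ) (hs : 1 ≤ s) :
    (Rfun s α : ℤ) = ∑ v ∈ Finset.Icc 1 s,
      (-1) ^ (s-v) * (Nat.choose (2*s) (s-v) : ℤ) *
        (Nat.choose ((α+1)*v + s - 1) (2*s-1) : ℤ) := by
  rw [Rfun_eq_Ncnt, coeff_formula α (2*s) (s*α) (by omega)]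
  have hsub : Finset.range s ⊆ Finset.range (2*s+1) := by
    intro j hj; simp only [Finset.mem_range] at *; omega
  rw [← Finset.sum_subset hsub (fun j hj hj' => by
    simp only [Finset.mem_range] at hj hj'
    have : ¬ (j * (α+1) ≤ s*α) := by
      have hj2 : s ≤ j := by omega
      have : s * (α+1) ≤ j * (α+1) := Nat.mul_le_mul_right _ hj2
      nlinarith
    rw [if_neg this, mul_zero])]
  refine Finset.sum_nbij' (fun j => s - j) (fun v => s - v) ?_ ?_ ?_ ?_ ?_
  · intro j hj
    simp only [Finset.mem_range, Finset.mem_Icc] at *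
    omega
  · intro v hv
    simp only [Finset.mem_range, Finset.mem_Icc] at *
    omega
  · intro j hj
    simp only [Finset.mem_range] at hj
    beta_reduce
    omega
  · intro v hv
    simp only [Finset.mem_Icc] at hv
    beta_reduce
    omega
  · intro j hj
    simp only [Finset.mem_range] at hj
    beta_reduce
    have hs2 : s - (s - j) = j := by omega
    rw [hs2]
    have hmul : (α+1) * (s-j) + (α+1) * j = (α+1) * s := by
      rw [← Nat.mul_add]
      congr 1
      omega
    have hcomm : (α+1) * j = j * (α+1) := Nat.mul_comm _ _
    have hms : (α+1) * s = s * α + s := by ring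
    by_cases h : j * (α+1) ≤ s * α
    · rw [if_pos h]
      have harg : 2*s - 1 + (s*α - j*(α+1)) = (α+1)*(s-j) + s - 1 := by omega
      rw [harg]
    · rw [if_neg h, mul_zero]
      have hz : Nat.choose ((α+1)*(s-j) + s - 1) (2*s-1) = 0 := by
        apply Nat.choose_eq_zero_of_lt
        omega
      rw [hz]
      push_cast
      ring
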